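/- For n ≥ 4, the quadratic form H_a(e1,e2,p1,p2) = (a1/2)⟨p1,p1⟩ + (a2/2)⟨p2,p2⟩ + a3⟨p1,e2⟩⟨p2,e1⟩ + a4⟨p1,p2⟩ restricted to the fibers of T*V_{n,2} is positive definite for every (e1,e2) ∈ V_{n,2} if and only if a1 > 0, a2 > 0, a1 + a2 > 2a3, and a1 a2 > a4². -/

import Mathlib

open Matrix

lemma cs_nonneg_aux (a1 a2 a4 A B C : ℝ) (ha1 : 0 < a1) (ha2 : 0 < a2)
    (ha4 : a4 ^ 2 < a1 * a2) (hA : 0 ≤ A) (hB : 0 ≤ B) (hC : C ^ 2 ≤ A * B) :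
    0 ≤ a1 * A + a2 * B + 2 * (a4 * C) := by
  have h1 : 0 ≤ a1 * A + a2 * B := by positivity
  have h2 : (2 * (a4 * C)) ^ 2 ≤ (a1 * A + a2 * B) ^ 2 := by
    nlinarith [sq_nonneg (a1 * A - a2 * B), sq_nonneg C,
      mul_nonneg (mul_pos ha1 ha2).le (sub_nonneg.2 hC)]
  nlinarith [h1, h2]

lemma cs_pos_aux (a1 a2 a4 A B C : ℝ) (ha1 : 0 < a1) (ha2 : 0 < a2)
    (ha4 : a4 ^ 2 < a1 * a2) (hA : 0 ≤ A) (hB : 0 ≤ B) (hC : C ^ 2 ≤ A * B)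
    (hAB : 0 < A ∨ 0 < B) :
    0 < a1 * A + a2 * B + 2 * (a4 * C) := by
  have h1 : 0 < a1 * A + a2 * B := by
    rcases hAB with h | h
    · have := mul_pos ha1 h; nlinarith [mul_nonneg ha2.le hB]
    · have := mul_pos ha2 h; nlinarith [mul_nonneg ha1.le hA]
  by_contra hcon
  push_neg at hcon
  have hT : 2 * (a4 * C) ≤ -(a1 * A + a2 * B) := by linarith
  have hT2 : (a1 * A + a2 * B) ^ 2 ≤ (2 * (a4 * C)) ^ 2 := by nlinarith
  have hC0 : C ≠ 0 := by
    intro h; rw [h] at hT; simp at hT; linarith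
  have hC2 : 0 < C ^ 2 := by positivity
  nlinarith [sq_nonneg (a1 * A - a2 * B), mul_pos (mul_pos ha1 ha2) hC2,
    mul_nonneg (mul_pos ha1 ha2).le (sub_nonneg.2 hC)]

lemma key_quadratic_aux (a1 a2 a3 a4 A B C x : ℝ) (ha1 : 0 < a1) (ha2 : 0 < a2)
    (ha3 : 2 * a3 < a1 + a2) (ha4 : a4 ^ 2 < a1 * a2)
    (hA : 0 ≤ A) (hB : 0 ≤ B) (hC : C ^ 2 ≤ A * B)
    (h : 0 < A + x ^ 2 ∨ 0 < B + x ^ 2) :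
    0 < a1 / 2 * (A + x ^ 2) + a2 / 2 * (B + x ^ 2) + a3 * (x * -x) + a4 * C := by
  have hE := cs_nonneg_aux a1 a2 a4 A B C ha1 ha2 ha4 hA hB hC
  rcases eq_or_ne x 0 with hx | hx
  · subst hx
    have h' : 0 < A ∨ 0 < B := by rcases h with h | h <;> simp at h <;> [left; right] <;> exact h
    have := cs_pos_aux a1 a2 a4 A B C ha1 ha2 ha4 hA hB hC h'
    nlinarith
  · have hx2 : 0 < x ^ 2 := by positivity
    nlinarith [mul_pos ha1 hx2]

lemma single_dot_single_aux {n : ℕ} (i j : Fin n) (x y : ℝ) :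
    Pi.single i x ⬝ᵥ Pi.single j y = if i = j then x * y else 0 := by
  rw [single_dotProduct, Pi.single_apply]
  split_ifs with h <;> ring

/-- (Lemma `pozitivnost`.) For `n ≥ 4`, the quadratic form
`H_a = (a₁/2)⟨p₁,p₁⟩ + (a₂/2)⟨p₂,p₂⟩ + a₃⟨p₁,e₂⟩⟨p₂,e₁⟩ + a₄⟨p₁,p₂⟩`
is positive definite on every cotangent fiber of `T*V_{n,2}` iff
`a₁ > 0`, `a₂ > 0`, `a₁ + a₂ > 2a₃` and `a₁a₂ > a₄²`. -/
theorem H_a_positive_definite_iff (n : ℕ) (hn : 4 ≤ n) (a1 a2 a3 a4 : ℝ) :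
    (∀ e1 e2 : Fin n → ℝ, e1 ⬝ᵥ e1 = 1 → e2 ⬝ᵥ e2 = 1 → e1 ⬝ᵥ e2 = 0 →
      ∀ p1 p2 : Fin n → ℝ, e1 ⬝ᵥ p1 = 0 → e2 ⬝ᵥ p2 = 0 → e1 ⬝ᵥ p2 + e2 ⬝ᵥ p1 = 0 →
        (p1, p2) ≠ 0 →
        0 < a1 / 2 * (p1 ⬝ᵥ p1) + a2 / 2 * (p2 ⬝ᵥ p2)
            + a3 * (p1 ⬝ᵥ e2) * (p2 ⬝ᵥ e1) + a4 * (p1 ⬝ᵥ p2))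
    ↔ (0 < a1 ∧ 0 < a2 ∧ 2 * a3 < a1 + a2 ∧ a4 ^ 2 < a1 * a2) := by
  constructor
  · intro h
    have h0 : (0:ℕ) < n := by omega
    have h1 : (1:ℕ) < n := by omega
    have h2 : (2:ℕ) < n := by omega
    set i0 : Fin n := ⟨0, h0⟩
    set i1 : Fin n := ⟨1, h1⟩
    set i2 : Fin n := ⟨2, h2⟩
    have ne01 : i0 ≠ i1 := Fin.ne_of_val_ne (by norm_num)
    have ne02 : i0 ≠ i2 := Fin.ne_of_val_ne (by norm_num)
    have ne12 : i1 ≠ i2 := Fin.ne_of_val_ne (by norm_num)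
    set e1 : Fin n → ℝ := Pi.single i0 1 with he1def
    set e2 : Fin n → ℝ := Pi.single i1 1 with he2def
    have he1 : e1 ⬝ᵥ e1 = 1 := by simp [he1def, single_dot_single_aux]
    have he2 : e2 ⬝ᵥ e2 = 1 := by simp [he2def, single_dot_single_aux]
    have he12 : e1 ⬝ᵥ e2 = 0 := by simp [he1def, he2def, single_dot_single_aux, ne01]
    have hsing_ne : ∀ (i : Fin n) (c : ℝ), c ≠ 0 → (Pi.single i c : Fin n → ℝ) ≠ 0 := by
      intro i c hc hh
      have := congrFun hh i
      simp at this
      exact hc this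
    have ha1 : 0 < a1 := by
      have := h e1 e2 he1 he2 he12 (Pi.single i2 1) 0
        (by simp [he1def, single_dot_single_aux, ne02]) (by simp)
        (by simp [he1def, he2def, single_dot_single_aux, ne12])
        (by simp [Prod.ext_iff])
      simp [he1def, he2def, single_dot_single_aux, ne02, ne12, (ne12).symm] at this
      linarith
    have ha2 : 0 < a2 := by
      have := h e1 e2 he1 he2 he12 0 (Pi.single i2 1)
        (by simp) (by simp [he2def, single_dot_single_aux, ne12])
        (by simp [he1def, he2def, single_dot_single_aux, ne02])
        (by simp [Prod.ext_iff])
      simp [he1def, he2def, single_dot_single_aux, ne02, ne12, (ne02).symm] at this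
      linarith
    refine ⟨ha1, ha2, ?_, ?_⟩
    · have := h e1 e2 he1 he2 he12 (Pi.single i1 1) (Pi.single i0 (-1))
        (by simp [he1def, single_dot_single_aux, ne01])
        (by simp [he2def, single_dot_single_aux, (ne01).symm])
        (by simp [he1def, he2def, single_dot_single_aux, ne01])
        (by simp [Prod.ext_iff])
      simp [he1def, he2def, single_dot_single_aux, ne01, (ne01).symm] at this
      linarith
    · have := h e1 e2 he1 he2 he12 (Pi.single i2 a4) (Pi.single i2 (-a1))
        (by simp [he1def, single_dot_single_aux, ne02])
        (by simp [he2def, single_dot_single_aux, ne12])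
        (by simp [he1def, he2def, single_dot_single_aux, ne02, ne12])
        (by simp [Prod.ext_iff]; intro _; exact ha1.ne')
      simp [he1def, he2def, single_dot_single_aux, ne02, ne12, (ne02).symm, (ne12).symm] at this
      nlinarith [this, ha1]
  · rintro ⟨ha1, ha2, ha3, ha4⟩
    intro e1 e2 he1 he2 he12 p1 p2 hp1 hp2 hp12 hne
    have c1 : e2 ⬝ᵥ p1 = p1 ⬝ᵥ e2 := dotProduct_comm _ _
    have c2 : e1 ⬝ᵥ p2 = -(p1 ⬝ᵥ e2) := by linarith
    have c3 : p2 ⬝ᵥ e1 = -(p1 ⬝ᵥ e2) := by rw [dotProduct_comm]; exact c2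
    have c4 : p1 ⬝ᵥ e1 = 0 := by rw [dotProduct_comm]; exact hp1
    have c5 : p2 ⬝ᵥ e2 = 0 := by rw [dotProduct_comm]; exact hp2
    have c6 : e2 ⬝ᵥ e1 = 0 := by rw [dotProduct_comm]; exact he12
    set q1 : Fin n → ℝ := p1 - (p1 ⬝ᵥ e2) • e2 with hq1def
    set q2 : Fin n → ℝ := p2 + (p1 ⬝ᵥ e2) • e1 with hq2def
    have hq1 : q1 ⬝ᵥ q1 = p1 ⬝ᵥ p1 - (p1 ⬝ᵥ e2) ^ 2 := by
      simp only [hq1def, sub_dotProduct, dotProduct_sub, smul_dotProduct, dotProduct_smul,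
        smul_eq_mul, c1, he2]
      ring
    have hq2 : q2 ⬝ᵥ q2 = p2 ⬝ᵥ p2 - (p1 ⬝ᵥ e2) ^ 2 := by
      simp only [hq2def, add_dotProduct, dotProduct_add, smul_dotProduct, dotProduct_smul,
        smul_eq_mul, c2, c3, he1]
      ring
    have hq12 : q1 ⬝ᵥ q2 = p1 ⬝ᵥ p2 := by
      simp only [hq1def, hq2def, sub_dotProduct, dotProduct_sub, add_dotProduct, dotProduct_add,
        smul_dotProduct, dotProduct_smul, smul_eq_mul, c4, c5, c6, hp2]
      ring
    have hA : 0 ≤ q1 ⬝ᵥ q1 := Finset.sum_nonneg fun i _ => mul_self_nonneg _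
    have hB : 0 ≤ q2 ⬝ᵥ q2 := Finset.sum_nonneg fun i _ => mul_self_nonneg _
    have hCS : (q1 ⬝ᵥ q2) ^ 2 ≤ (q1 ⬝ᵥ q1) * (q2 ⬝ᵥ q2) := by
      have := Finset.sum_mul_sq_le_sq_mul_sq Finset.univ q1 q2
      simpa [dotProduct, sq] using this
    rw [Ne, Prod.mk_eq_zero, not_and_or] at hne
    have hdisj : 0 < (q1 ⬝ᵥ q1) + (p1 ⬝ᵥ e2) ^ 2 ∨ 0 < (q2 ⬝ᵥ q2) + (p1 ⬝ᵥ e2) ^ 2 := by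
      rcases hne with hne | hne
      · left
        have h0 : 0 ≤ p1 ⬝ᵥ p1 := Finset.sum_nonneg fun i _ => mul_self_nonneg _
        have h1 : p1 ⬝ᵥ p1 ≠ 0 := fun hh => hne (dotProduct_self_eq_zero.mp hh)
        have := lt_of_le_of_ne h0 (Ne.symm h1)
        linarith [hq1]
      · right
        have h0 : 0 ≤ p2 ⬝ᵥ p2 := Finset.sum_nonneg fun i _ => mul_self_nonneg _
        have h1 : p2 ⬝ᵥ p2 ≠ 0 := fun hh => hne (dotProduct_self_eq_zero.mp hh)
        have := lt_of_le_of_ne h0 (Ne.symm h1)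
        linarith [hq2]
    have := key_quadratic_aux a1 a2 a3 a4 (q1 ⬝ᵥ q1) (q2 ⬝ᵥ q2) (q1 ⬝ᵥ q2) (p1 ⬝ᵥ e2)
      ha1 ha2 ha3 ha4 hA hB hCS hdisj
    rw [hq12] at this
    rw [c3]
    nlinarith [this, hq1, hq2]
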